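/- (Corollary 4.1) Under the Haar-type hypotheses, define the Galerkin flux f̂(û) := û * û + û * ŝ(û), where ŝ(û) := H · sgn(D(û)) · Hᵀ e₀ and û * ŵ := P(û) ŵ. Then (a) f̂(û) = H · (D(û)² + |D(û)|) · Hᵀ e₀ for every û : Fin n → ℝ, and (b) if every diagonal entry of D(û) is nonzero, then f̂ is Fréchet differentiable at û and its derivative is the linear map represented by the matrix H · (2 • D(û) + sgn(D(û))) · Hᵀ, which equals 2 • P(û) + P(ŝ(û)). -/

import Mathlib

open Matrix

lemma mul_sign_eq_abs (x : ℝ) : x * Real.sign x = |x| := by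
  rcases lt_trichotomy x 0 with h | h | h
  · rw [Real.sign_of_neg h, abs_of_neg h]; ring
  · simp [h]
  · rw [Real.sign_of_pos h, abs_of_pos h]; ring

lemma sign_coe_eq (x : ℝ) (hx : x ≠ 0) : (SignType.sign x : ℝ) = Real.sign x := by
  rcases hx.lt_or_gt with h | h
  · rw [Real.sign_of_neg h]; simp [sign_neg h]
  · rw [Real.sign_of_pos h]; simp [sign_pos h]

/-- Corollary 4.1: under the Haar-type hypotheses, the Galerkin flux
`f(uh) := uh * uh + uh * s(uh)` with sign modes `s(uh) := H · sgn(D(uh)) · Hᵀ e₀`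
satisfies (a) `f(uh) = H · (D(uh)² + |D(uh)|) · Hᵀ e₀` for every `uh`, and
(b) if every diagonal entry of `D(uh)` is nonzero then `f` is Fréchet
differentiable at `uh` with derivative represented by the matrix
`H · (2 D(uh) + sgn(D(uh))) · Hᵀ`, which equals `2 • P(uh) + P(s(uh))`. -/
theorem haar_sg_lipschitz_flux_corollary {n : ℕ} [NeZero n]
    (M : Fin n → Matrix (Fin n) (Fin n) ℝ)
    (hMsymm : ∀ k, (M k).IsSymm) (hM0 : M 0 = 1)
    (P : (Fin n → ℝ) → Matrix (Fin n) (Fin n) ℝ)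
    (hP : ∀ uh, P uh = ∑ k, uh k • M k)
    (hsym : ∀ uh wh : Fin n → ℝ, (P uh).mulVec wh = (P wh).mulVec uh)
    (e0 : Fin n → ℝ) (he0 : e0 = Pi.single 0 1)
    (H : Matrix (Fin n) (Fin n) ℝ) (hH : Hᵀ * H = 1)
    (hdiag : ∀ k, (Hᵀ * M k * H).IsDiag)
    (s : (Fin n → ℝ) → (Fin n → ℝ))
    (hs : ∀ uh, s uh = (H * Matrix.diagonal
        (fun i => Real.sign ((Hᵀ * P uh * H) i i)) * Hᵀ).mulVec e0)
    (f : (Fin n → ℝ) → (Fin n → ℝ))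
    (hf : ∀ uh, f uh = (P uh).mulVec uh + (P uh).mulVec (s uh)) :
    (∀ uh : Fin n → ℝ, f uh
        = (H * Matrix.diagonal
            (fun i => ((Hᵀ * P uh * H) i i) ^ 2 + |(Hᵀ * P uh * H) i i|)
          * Hᵀ).mulVec e0) ∧
    (∀ uh : Fin n → ℝ, (∀ i, (Hᵀ * P uh * H) i i ≠ 0) →
      H * Matrix.diagonal
          (fun i => 2 * ((Hᵀ * P uh * H) i i) + Real.sign ((Hᵀ * P uh * H) i i))
        * Hᵀ = (2 : ℝ) • P uh + P (s uh) ∧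
      HasFDerivAt f
        (LinearMap.toContinuousLinearMap
          (Matrix.mulVecLin ((2 : ℝ) • P uh + P (s uh)))) uh) := by
  have hHHt : H * Hᵀ = 1 := mul_eq_one_comm.mp hH
  have hPe0 : P e0 = 1 := by
    rw [hP, he0]
    rw [Finset.sum_eq_single 0 (fun k _ hk => by simp [Pi.single_apply, hk])
      (fun h => absurd (Finset.mem_univ 0) h)]
    simp [hM0]
  have hPv0 : ∀ v, (P v).mulVec e0 = v := fun v => by
    rw [hsym, hPe0, Matrix.one_mulVec]
  have hPmm : ∀ v, Hᵀ * P v * H = ∑ k, v k • (Hᵀ * M k * H) := by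
    intro v
    rw [hP, Finset.mul_sum, Finset.sum_mul]
    exact Finset.sum_congr rfl fun k _ => by
      rw [Matrix.mul_smul, Matrix.smul_mul]
  have hDdiag : ∀ v, (Hᵀ * P v * H).IsDiag := by
    intro v i j hij
    rw [hPmm]
    rw [Matrix.sum_apply]
    exact Finset.sum_eq_zero fun k _ => by
      simp [Matrix.smul_apply, hdiag k hij]
  have hPform : ∀ v, P v = H * Matrix.diagonal (fun i => (Hᵀ * P v * H) i i) * Hᵀ := by
    intro v
    have hd : Matrix.diagonal (fun i => (Hᵀ * P v * H) i i) = Hᵀ * P v * H :=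
      (hDdiag v).diagonal_diag
    rw [hd]
    calc P v = (H * Hᵀ) * P v * (H * Hᵀ) := by rw [hHHt, one_mul, mul_one]
    _ = H * (Hᵀ * P v * H) * Hᵀ := by simp only [Matrix.mul_assoc]
  have hprod : ∀ a b : Fin n → ℝ, (H * Matrix.diagonal a * Hᵀ) * (H * Matrix.diagonal b * Hᵀ)
      = H * Matrix.diagonal (fun i => a i * b i) * Hᵀ := by
    intro a b
    have hD : Matrix.diagonal (fun i => a i * b i)
        = Matrix.diagonal a * Matrix.diagonal b := (Matrix.diagonal_mul_diagonal a b).symm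
    rw [hD]
    calc (H * Matrix.diagonal a * Hᵀ) * (H * Matrix.diagonal b * Hᵀ)
        = H * (Matrix.diagonal a * ((Hᵀ * H) * (Matrix.diagonal b * Hᵀ))) := by
          simp only [Matrix.mul_assoc]
    _ = H * (Matrix.diagonal a * Matrix.diagonal b) * Hᵀ := by
          rw [hH, one_mul]; simp only [Matrix.mul_assoc]
  set B : Matrix (Fin n) (Fin n) ℝ := Matrix.of (fun i k => (Hᵀ * M k * H) i i) with hBdef
  have hB : ∀ v i, B.mulVec v i = (Hᵀ * P v * H) i i := by
    intro v i
    rw [hPmm, Matrix.sum_apply]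
    simp only [Matrix.mulVec, dotProduct, hBdef, Matrix.of_apply, Matrix.smul_apply,
      smul_eq_mul]
    exact Finset.sum_congr rfl fun k _ => mul_comm _ _
  set A : Matrix (Fin n) (Fin n) ℝ := H * Matrix.diagonal (Hᵀ.mulVec e0) with hAdef
  have hA : ∀ c : Fin n → ℝ, A.mulVec c = (H * Matrix.diagonal c * Hᵀ).mulVec e0 := by
    intro c
    have harg : Matrix.diagonal (Hᵀ.mulVec e0) *ᵥ c = Matrix.diagonal c *ᵥ (Hᵀ *ᵥ e0) := by
      ext i
      rw [Matrix.mulVec_diagonal, Matrix.mulVec_diagonal, mul_comm]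
    calc A *ᵥ c = H *ᵥ (Matrix.diagonal (Hᵀ.mulVec e0) *ᵥ c) := by
          rw [hAdef, Matrix.mulVec_mulVec]
    _ = H *ᵥ (Matrix.diagonal c *ᵥ (Hᵀ *ᵥ e0)) := by rw [harg]
    _ = (H * Matrix.diagonal c * Hᵀ) *ᵥ e0 := by
          rw [Matrix.mulVec_mulVec, Matrix.mulVec_mulVec, Matrix.mul_assoc]
  have hAB : ∀ v, A.mulVec (B.mulVec v) = v := by
    intro v
    have : B.mulVec v = fun i => (Hᵀ * P v * H) i i := funext (hB v)
    rw [this, hA, ← hPform, hPv0]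
  have hABone : A * B = 1 := by
    ext i j
    have h1 := congrFun (hAB (Pi.single j 1)) i
    rw [Matrix.mulVec_mulVec] at h1
    rw [Matrix.mulVec_single] at h1
    simpa [Matrix.one_apply, Pi.single_apply, eq_comm] using h1
  have hBAv : ∀ c, B.mulVec (A.mulVec c) = c := by
    intro c
    rw [Matrix.mulVec_mulVec, mul_eq_one_comm.mp hABone, Matrix.one_mulVec]
  -- P of s
  have hPs : ∀ v, P (s v)
      = H * Matrix.diagonal (fun i => Real.sign ((Hᵀ * P v * H) i i)) * Hᵀ := by
    intro v
    have h1 : B.mulVec (s v) = fun i => Real.sign ((Hᵀ * P v * H) i i) := by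
      rw [hs v, ← hA, hBAv]
    rw [hPform (s v)]
    congr 1
    rw [show (fun i => (Hᵀ * P (s v) * H) i i) = B.mulVec (s v) from (funext (hB (s v))).symm, h1]
  -- key computation
  have key : ∀ (c : Fin n → ℝ) (w : Fin n → ℝ),
      (H * Matrix.diagonal c * Hᵀ).mulVec w
        = (H * Matrix.diagonal (fun i => c i * (Hᵀ * P w * H) i i) * Hᵀ).mulVec e0 := by
    intro c w
    calc (H * Matrix.diagonal c * Hᵀ) *ᵥ w
        = (H * Matrix.diagonal c * Hᵀ) *ᵥ ((P w) *ᵥ e0) := by rw [hPv0]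
    _ = ((H * Matrix.diagonal c * Hᵀ) * P w) *ᵥ e0 := Matrix.mulVec_mulVec _ _ _
    _ = ((H * Matrix.diagonal c * Hᵀ)
          * (H * Matrix.diagonal (fun i => (Hᵀ * P w * H) i i) * Hᵀ)) *ᵥ e0 := by
        conv_lhs => rw [hPform w]
    _ = (H * Matrix.diagonal (fun i => c i * (Hᵀ * P w * H) i i) * Hᵀ) *ᵥ e0 := by
        rw [hprod]
  -- part (a)
  have parta : ∀ uh : Fin n → ℝ, f uh
      = (H * Matrix.diagonal
          (fun i => ((Hᵀ * P uh * H) i i) ^ 2 + |(Hᵀ * P uh * H) i i|)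
        * Hᵀ).mulVec e0 := by
    intro uh
    have h1 : (P uh).mulVec uh
        = (H * Matrix.diagonal (fun i => ((Hᵀ * P uh * H) i i) ^ 2) * Hᵀ).mulVec e0 := by
      conv_lhs => rw [hPform uh]
      rw [key]
      have : (fun i => (Hᵀ * P uh * H) i i * (Hᵀ * P uh * H) i i)
          = fun i => ((Hᵀ * P uh * H) i i) ^ 2 := by funext i; ring
      rw [this]
    have h2 : (P uh).mulVec (s uh)
        = (H * Matrix.diagonal (fun i => |(Hᵀ * P uh * H) i i|) * Hᵀ).mulVec e0 := by
      rw [hsym, hPs uh, key]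
      have : (fun i => Real.sign ((Hᵀ * P uh * H) i i) * (Hᵀ * P uh * H) i i)
          = fun i => |(Hᵀ * P uh * H) i i| := by
        funext i; rw [mul_comm, mul_sign_eq_abs]
      rw [this]
    rw [hf uh, h1, h2, ← Matrix.add_mulVec]
    congr 1
    rw [← Matrix.add_mul, ← Matrix.mul_add, ← Matrix.diagonal_add]
  refine ⟨parta, ?_⟩
  intro uh hne
  -- the matrix identity
  have hmat : H * Matrix.diagonal
        (fun i => 2 * ((Hᵀ * P uh * H) i i) + Real.sign ((Hᵀ * P uh * H) i i)) * Hᵀ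
      = (2 : ℝ) • P uh + P (s uh) := by
    have e1 : (2:ℝ) • P uh
        = H * Matrix.diagonal (fun i => 2 * ((Hᵀ * P uh * H) i i)) * Hᵀ := by
      conv_lhs => rw [hPform uh]
      have : Matrix.diagonal (fun i => 2 * ((Hᵀ * P uh * H) i i))
          = (2:ℝ) • Matrix.diagonal (fun i => (Hᵀ * P uh * H) i i) := by
        rw [← Matrix.diagonal_smul]
        rfl
      rw [this, Matrix.mul_smul, Matrix.smul_mul]
    rw [e1, hPs uh, ← Matrix.add_mul, ← Matrix.mul_add, Matrix.diagonal_add]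
  refine ⟨hmat, ?_⟩
  -- notation
  have hfeq2 : f = fun v => A.mulVec (fun i => ((B.mulVec v) i) ^ 2 + |(B.mulVec v) i|) := by
    funext v
    have hfun : (fun i => ((B.mulVec v) i) ^ 2 + |(B.mulVec v) i|)
        = fun i => ((Hᵀ * P v * H) i i) ^ 2 + |(Hᵀ * P v * H) i i| := by
      funext i; rw [hB]
    rw [parta v, ← hA, hfun]
  set c' : Fin n → ℝ :=
    fun i => 2 * ((Hᵀ * P uh * H) i i) + Real.sign ((Hᵀ * P uh * H) i i) with hc'
  -- the three pieces of the composition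
  have hinner : HasFDerivAt (fun v : Fin n → ℝ => B.mulVec v)
      (LinearMap.toContinuousLinearMap (Matrix.mulVecLin B)) uh :=
    (LinearMap.toContinuousLinearMap (Matrix.mulVecLin B)).hasFDerivAt
  have houter : HasFDerivAt (fun w : Fin n → ℝ => A.mulVec w)
      (LinearMap.toContinuousLinearMap (Matrix.mulVecLin A))
      ((fun (w : Fin n → ℝ) (i : Fin n) => (w i) ^ 2 + |w i|) (B.mulVec uh)) :=
    (LinearMap.toContinuousLinearMap (Matrix.mulVecLin A)).hasFDerivAt
  have hmid : HasFDerivAt (fun (w : Fin n → ℝ) (i : Fin n) => (w i) ^ 2 + |w i|)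
      (LinearMap.toContinuousLinearMap (Matrix.mulVecLin (Matrix.diagonal c')))
      (B.mulVec uh) := by
    apply hasFDerivAt_pi''
    intro i
    have hxi : (B.mulVec uh) i = (Hᵀ * P uh * H) i i := hB uh i
    have hgi : HasDerivAt (fun x : ℝ => x ^ 2 + |x|) (c' i) ((B.mulVec uh) i) := by
      have h1 : HasDerivAt (fun x : ℝ => x ^ 2) (2 * (B.mulVec uh) i) ((B.mulVec uh) i) := by
        simpa using hasDerivAt_pow 2 ((B.mulVec uh) i)
      have hne' : (B.mulVec uh) i ≠ 0 := by rw [hxi]; exact hne i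
      have h2 : HasDerivAt (fun x : ℝ => |x|) (Real.sign ((B.mulVec uh) i)) ((B.mulVec uh) i) := by
        rw [← sign_coe_eq _ hne']
        exact hasDerivAt_abs hne'
      have h3 := h1.add h2
      simp only [hxi] at h3
      simp only [hc', hxi]
      exact h3
    have hproj : HasFDerivAt (fun w : Fin n → ℝ => w i)
        (ContinuousLinearMap.proj (R := ℝ) (φ := fun _ : Fin n => ℝ) i) (B.mulVec uh) :=
      hasFDerivAt_apply i (B.mulVec uh)
    have hco := hgi.comp_hasFDerivAt (B.mulVec uh) hproj
    convert hco using 1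
    · rfl
    ext w
    simp [Matrix.mulVec_diagonal, mul_comm]
    ext w
    simp [Matrix.mulVec_diagonal, mul_comm]
  have hcomp := houter.comp uh (hmid.comp uh hinner)
  -- identify the function
  have hfun : ((fun (w : Fin n → ℝ) (i : Fin n) => (w i) ^ 2 + |w i|) ∘
      (fun v : Fin n → ℝ => B.mulVec v)) = fun v => (fun i => ((B.mulVec v) i) ^ 2 + |(B.mulVec v) i|) := rfl
  -- identify the derivative
  have hder : (LinearMap.toContinuousLinearMap
        (Matrix.mulVecLin ((2 : ℝ) • P uh + P (s uh))))
      = (LinearMap.toContinuousLinearMap (Matrix.mulVecLin A)).comp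
        ((LinearMap.toContinuousLinearMap (Matrix.mulVecLin (Matrix.diagonal c'))).comp
          (LinearMap.toContinuousLinearMap (Matrix.mulVecLin B))) := by
    apply ContinuousLinearMap.ext
    intro w
    show ((2 : ℝ) • P uh + P (s uh)).mulVec w
        = A.mulVec ((Matrix.diagonal c').mulVec (B.mulVec w))
    have harg : (Matrix.diagonal c').mulVec (B.mulVec w)
        = fun i => c' i * (Hᵀ * P w * H) i i := by
      ext i
      rw [Matrix.mulVec_diagonal, hB]
    rw [harg, hA, ← key, hc', hmat]
  rw [hfeq2, hder]
  exact hcomp
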